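/- Consider the function D(η) = 2/3 − L(η) on [0, ∞), where L(η) = ((2 − π/2) η + √(2π)(1 − log 2 − π/12)) / (η + √(π/2))³. Then D(0) = 1 − 4(1 − log 2)/π, and D has a unique global minimizer on [0, ∞), located at η* = √(2π)(log 8 − 2)/(4 − π); that is, D(η*) ≤ D(η) for all η ≥ 0, with equality only at η = η*. -/

import Mathlib

open Real

noncomputable def Lfun (η : ℝ) : ℝ :=
  ((2 - Real.pi / 2) * η + Real.sqrt (2 * Real.pi) * (1 - Real.log 2 - Real.pi / 12)) /
    (η + Real.sqrt (Real.pi / 2)) ^ 3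

noncomputable def Dfun (η : ℝ) : ℝ := 2 / 3 - Lfun η

noncomputable def ηstar : ℝ := Real.sqrt (2 * Real.pi) * (Real.log 8 - 2) / (4 - Real.pi)

lemma keyalg (a b c s x : ℝ) (ha : a ≠ 0) (h : 2 * a * s = a * c - 3 * b) :
    (a * s + b) * (x + c) ^ 3 - (a * x + b) * (s + c) ^ 3 =
      (x - s) ^ 2 * (s + c) * (a * (x + c) - 3 * (b - a * c)) / 3 := by
  have hs : s = (a * c - 3 * b) / (2 * a) := by
    field_simp
    linarith
  subst hs
  field_simp
  ring

theorem Dfun_value_and_unique_minimizer :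
    Dfun 0 = 1 - 4 * (1 - Real.log 2) / Real.pi ∧
    (∀ η : ℝ, 0 ≤ η → Dfun ηstar ≤ Dfun η) ∧
    (∀ η : ℝ, 0 ≤ η → Dfun η = Dfun ηstar → η = ηstar) := by
  have hπ3 := Real.pi_gt_three
  have hπ4 := Real.pi_lt_d2
  have hl : (0.6931471803 : ℝ) < Real.log 2 := Real.log_two_gt_d9
  set l := Real.log 2 with hldef
  set c := Real.sqrt (Real.pi / 2) with hcdef
  have hcpos : 0 < c := Real.sqrt_pos.mpr (by linarith)
  have hc2 : c ^ 2 = Real.pi / 2 := Real.sq_sqrt (by linarith)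
  have hs2π : Real.sqrt (2 * Real.pi) = 2 * c := by
    rw [hcdef, show (2 : ℝ) * Real.pi = 2 ^ 2 * (Real.pi / 2) by ring,
      Real.sqrt_mul (by positivity), Real.sqrt_sq (by norm_num)]
  have hlog8 : Real.log 8 = 3 * l := by
    rw [show (8 : ℝ) = 2 ^ 3 by norm_num, Real.log_pow, hldef]
    push_cast; ring
  set a : ℝ := 2 - Real.pi / 2 with hadef
  set b : ℝ := 2 * c * (1 - l - Real.pi / 12) with hbdef
  have ha : (0 : ℝ) < a := by rw [hadef]; linarith
  have hane : a ≠ 0 := ne_of_gt ha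
  have h4π : (0 : ℝ) < 4 - Real.pi := by linarith
  have hηs : ηstar = c * (6 * l - 4) / (4 - Real.pi) := by
    rw [ηstar, hs2π, hlog8]
    field_simp
    ring
  have hηspos : 0 < ηstar := by
    rw [hηs]
    have : (0:ℝ) < 6 * l - 4 := by linarith
    positivity
  have hcrit : 2 * a * ηstar = a * c - 3 * b := by
    rw [hηs, hadef, hbdef]
    field_simp
    ring
  have hsc : 0 < ηstar + c := by linarith
  -- Lfun in terms of a b c
  have hLfun : ∀ x : ℝ, Lfun x = (a * x + b) / (x + c) ^ 3 := by
    intro x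
    rw [Lfun, hs2π]
    try ring_nf
  -- key identity
  have key : ∀ x : ℝ, 0 ≤ x → Dfun x - Dfun ηstar =
      (x - ηstar) ^ 2 * (ηstar + c) * (a * (x + c) - 3 * (b - a * c)) / 3 /
        ((ηstar + c) ^ 3 * (x + c) ^ 3) := by
    intro x hx
    have hxc : 0 < x + c := by linarith
    have h1 : Dfun x - Dfun ηstar = Lfun ηstar - Lfun x := by
      rw [Dfun, Dfun]; ring
    rw [h1, hLfun, hLfun, ← keyalg a b c ηstar x hane hcrit]
    field_simp
  -- positivity of the last factor
  have hfac : ∀ x : ℝ, 0 ≤ x → 0 < a * (x + c) - 3 * (b - a * c) := by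
    intro x hx
    have hbac : b - a * c = c * (Real.pi / 3 - 2 * l) := by
      rw [hbdef, hadef]; ring
    have h1 : Real.pi / 3 - 2 * l < 0 := by linarith
    have h2 : 0 < a * (x + c) := by positivity
    nlinarith [mul_pos hcpos (neg_pos.mpr h1)]
  refine ⟨?_, ?_, ?_⟩
  · -- value at 0
    rw [Dfun, hLfun]
    have hc3 : (0 + c) ^ 3 = Real.pi / 2 * c := by
      rw [show (0 + c) ^ 3 = c ^ 2 * c by ring, hc2]
    rw [hc3, hbdef]
    have hπne : Real.pi ≠ 0 := by linarith
    field_simp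
    ring
  · intro η hη
    have hk := key η hη
    have hxc : 0 < η + c := by linarith
    have hnum : 0 ≤ (η - ηstar) ^ 2 * (ηstar + c) * (a * (η + c) - 3 * (b - a * c)) / 3 := by
      have hf := hfac η hη
      apply div_nonneg _ (by norm_num : (0:ℝ) ≤ 3)
      exact mul_nonneg (mul_nonneg (sq_nonneg _) hsc.le) hf.le
    linarith [div_nonneg hnum (le_of_lt (by positivity : (0:ℝ) < (ηstar + c) ^ 3 * (η + c) ^ 3)), hk]
  · intro η hη heq
    have hk := key η hη
    have hxc : 0 < η + c := by linarith
    rw [heq, sub_self] at hk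
    have hden : (0:ℝ) < (ηstar + c) ^ 3 * (η + c) ^ 3 := by positivity
    have hN : (η - ηstar) ^ 2 * (ηstar + c) * (a * (η + c) - 3 * (b - a * c)) = 0 := by
      rcases div_eq_zero_iff.mp hk.symm with h | h
      · rcases div_eq_zero_iff.mp h with h2 | h2
        · exact h2
        · norm_num at h2
      · exact absurd h (ne_of_gt hden)
    have hf := hfac η hη
    have h2 : (η - ηstar) ^ 2 = 0 := by
      rcases mul_eq_zero.mp hN with h3 | h3
      · rcases mul_eq_zero.mp h3 with h4 | h4
        · exact h4
        · linarith
      · linarith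
    have h3 : η - ηstar = 0 := by
      exact pow_eq_zero_iff (two_ne_zero) |>.mp h2
    linarith
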